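/- Let C be a finite family of axis-parallel closed rectangles with integer corners in [n]². Then the polytope QSTAB(C) is integral (every extreme point of QSTAB(C) has all coordinates in {0,1}) if and only if the intersection graph I(C) is a perfect graph. -/

import Mathlib

open scoped Classical

noncomputable section

abbrev Pt : Type := ℝ × ℝ
abbrev Rect : Type := Set Pt

def IsRect (R : Rect) : Prop := ∃ a b : Pt, a ≤ b ∧ R = Set.Icc a b

def Intersects (R S : Rect) : Prop := (R ∩ S).Nonempty

def IndepFamily (I : Set Rect) : Prop :=
  ∀ R ∈ I, ∀ S ∈ I, R ≠ S → R ∩ S = ∅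

def IsHittingSet (H : Set Pt) (C : Set Rect) : Prop :=
  ∀ R ∈ C, ∃ p ∈ H, p ∈ R

def mis (C : Set Rect) : ℕ :=
  sSup {n | ∃ I : Finset Rect, ↑I ⊆ C ∧ IndepFamily ↑I ∧ I.card = n}

def mhs (C : Set Rect) : ℕ :=
  sInf {n | ∃ H : Finset Pt, IsHittingSet ↑H C ∧ H.card = n}

def brf (A B : Finset Pt) (Z : Set Pt) : Set Rect :=
  {R | ∃ a ∈ A, ∃ b ∈ B, a ≤ b ∧ Set.Icc a b ⊆ Z ∧ R = Set.Icc a b}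

def Standing (A B : Finset Pt) (Z : Set Pt) : Prop :=
  (A ∩ B = ∅) ∧ (↑(A ∪ B) ⊆ Z) ∧
  (∀ p ∈ A ∪ B, ∃ i j : ℤ, 1 ≤ i ∧ i ≤ ((A ∪ B).card : ℤ) ∧ 1 ≤ j ∧ j ≤ ((A ∪ B).card : ℤ) ∧
    p = ((i : ℝ), (j : ℝ))) ∧
  (∀ p ∈ A ∪ B, ∀ q ∈ A ∪ B, p ≠ q → p.1 ≠ q.1 ∧ p.2 ≠ q.2)

def minRects (C : Set Rect) : Set Rect :=
  {R | R ∈ C ∧ ∀ S ∈ C, S ⊆ R → S = R}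

def IsRectCorner (p : Pt) (R : Rect) : Prop :=
  ∃ a b : Pt, a ≤ b ∧ R = Set.Icc a b ∧
    (p = a ∨ p = b ∨ p = (a.1, b.2) ∨ p = (b.1, a.2))

def CornerFree (R S : Rect) : Prop :=
  (∀ p, IsRectCorner p R → p ∉ interior S) ∧ (∀ p, IsRectCorner p S → p ∉ interior R)

def CFI (K : Set Rect) : Prop :=
  ∀ R ∈ K, ∀ S ∈ K, R ≠ S → CornerFree R S

def interGraph (K : Set Rect) : SimpleGraph K :=
  SimpleGraph.fromRel (fun R S => Intersects (R : Rect) (S : Rect))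

def IsComparabilityGraph {V : Type*} (G : SimpleGraph V) : Prop :=
  ∃ le : V → V → Prop, (∀ v, le v v) ∧
    (∀ u v w, le u v → le v w → le u w) ∧
    (∀ u v, le u v → le v u → u = v) ∧
    (∀ u v, G.Adj u v ↔ u ≠ v ∧ (le u v ∨ le v u))

def QSTAB (n : ℕ) (C : Finset Rect) : Set (Rect → ℝ) :=
  {x | (∀ R, 0 ≤ x R) ∧ (∀ R ∉ C, x R = 0) ∧
    ∀ i j : ℤ, 1 ≤ i → i ≤ (n : ℤ) → 1 ≤ j → j ≤ (n : ℤ) →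
      ∑ R ∈ C.filter (fun R => ((i : ℝ), (j : ℝ)) ∈ R), x R ≤ 1}

def misLP (n : ℕ) (C : Finset Rect) : ℝ :=
  sSup {s | ∃ x ∈ QSTAB n C, s = ∑ R ∈ C, x R}

def cliqueNum' {V : Type*} (G : SimpleGraph V) : ℕ :=
  sSup {n | ∃ s : Finset V, G.IsNClique n s}

def IsPerfect {V : Type*} (G : SimpleGraph V) : Prop :=
  ∀ S : Set V, (G.induce S).chromaticNumber = (cliqueNum' (G.induce S) : ℕ∞)

def rectArea (R : Rect) : ℝ :=
  (sSup (Prod.fst '' R) - sInf (Prod.fst '' R)) *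
  (sSup (Prod.snd '' R) - sInf (Prod.snd '' R))

def blCorner (R : Rect) : Pt := (sInf (Prod.fst '' R), sInf (Prod.snd '' R))
def trCorner (R : Rect) : Pt := (sSup (Prod.fst '' R), sSup (Prod.snd '' R))

/-- A rectangle with integer corners in [n]². -/
def IntCornersIn (n : ℕ) (R : Rect) : Prop :=
  ∃ a b : ℤ × ℤ, a.1 ≤ b.1 ∧ a.2 ≤ b.2 ∧
    1 ≤ a.1 ∧ b.1 ≤ (n : ℤ) ∧ 1 ≤ a.2 ∧ b.2 ≤ (n : ℤ) ∧
    R = Set.Icc (((a.1 : ℝ), (a.2 : ℝ)) : Pt) (((b.1 : ℝ), (b.2 : ℝ)) : Pt)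

set_option linter.unusedSectionVars false
set_option maxHeartbeats 1000000 in
example : True := trivial

namespace RectPerfect

variable {V : Type*} [Fintype V]

def RelStable (G : SimpleGraph V) (A : Finset V) : Prop := ∀ u ∈ A, ∀ v ∈ A, ¬ G.Adj u v
def RelClique (G : SimpleGraph V) (Q : Finset V) : Prop := ∀ u ∈ Q, ∀ v ∈ Q, u ≠ v → G.Adj u v
def relOmega (G : SimpleGraph V) (S : Finset V) : ℕ :=
  sSup {k | ∃ Q ⊆ S, RelClique G Q ∧ Q.card = k}
def relAlpha (G : SimpleGraph V) (S : Finset V) : ℕ :=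
  sSup {k | ∃ A ⊆ S, RelStable G A ∧ A.card = k}
def RelColorable (G : SimpleGraph V) (S : Finset V) (k : ℕ) : Prop :=
  ∃ f : V → ℕ, (∀ v ∈ S, f v < k) ∧ ∀ u ∈ S, ∀ v ∈ S, G.Adj u v → f u ≠ f v
def relChi (G : SimpleGraph V) (S : Finset V) : ℕ := sInf {k | RelColorable G S k}

variable {G : SimpleGraph V}

lemma relOmega_bddAbove (S : Finset V) : BddAbove {k | ∃ Q ⊆ S, RelClique G Q ∧ Q.card = k} :=
  ⟨S.card, by rintro k ⟨Q, hQS, -, rfl⟩; exact Finset.card_le_card hQS⟩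

lemma relAlpha_bddAbove (S : Finset V) : BddAbove {k | ∃ A ⊆ S, RelStable G A ∧ A.card = k} :=
  ⟨S.card, by rintro k ⟨Q, hQS, -, rfl⟩; exact Finset.card_le_card hQS⟩

lemma le_relOmega {S Q : Finset V} (hQS : Q ⊆ S) (hQ : RelClique G Q) : Q.card ≤ relOmega G S :=
  le_csSup (relOmega_bddAbove S) ⟨Q, hQS, hQ, rfl⟩

lemma le_relAlpha {S A : Finset V} (hAS : A ⊆ S) (hA : RelStable G A) : A.card ≤ relAlpha G S :=
  le_csSup (relAlpha_bddAbove S) ⟨A, hAS, hA, rfl⟩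

lemma relOmega_spec (S : Finset V) : ∃ Q ⊆ S, RelClique G Q ∧ Q.card = relOmega G S :=
  Nat.sSup_mem (⟨0, ∅, Finset.empty_subset S, fun u hu => absurd hu (Finset.notMem_empty u),
    Finset.card_empty⟩ : {k | ∃ Q ⊆ S, RelClique G Q ∧ Q.card = k}.Nonempty) (relOmega_bddAbove S)

lemma relAlpha_spec (S : Finset V) : ∃ A ⊆ S, RelStable G A ∧ A.card = relAlpha G S :=
  Nat.sSup_mem (⟨0, ∅, Finset.empty_subset S, fun u hu => absurd hu (Finset.notMem_empty u),
    Finset.card_empty⟩ : {k | ∃ A ⊆ S, RelStable G A ∧ A.card = k}.Nonempty) (relAlpha_bddAbove S)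

lemma relOmega_mono {S T : Finset V} (h : S ⊆ T) : relOmega G S ≤ relOmega G T := by
  obtain ⟨Q, hQS, hQ, hcard⟩ := relOmega_spec (G := G) S
  exact hcard ▸ le_relOmega (hQS.trans h) hQ

lemma relOmega_pos {S : Finset V} (h : S.Nonempty) : 1 ≤ relOmega G S := by
  obtain ⟨v, hv⟩ := h
  have h1 : ({v} : Finset V).card ≤ relOmega G S := by
    refine le_relOmega (by simpa) ?_
    intro a ha b hb hab
    simp only [Finset.mem_singleton] at ha hb
    exact absurd (ha.trans hb.symm) hab
  simpa using h1

lemma relAlpha_pos {S : Finset V} (h : S.Nonempty) : 1 ≤ relAlpha G S := by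
  obtain ⟨v, hv⟩ := h
  have h1 : ({v} : Finset V).card ≤ relAlpha G S := by
    refine le_relAlpha (by simpa) ?_
    intro a ha b hb
    simp only [Finset.mem_singleton] at ha hb
    subst ha; subst hb
    exact G.irrefl
  simpa using h1

lemma relColorable_card (S : Finset V) : RelColorable G S S.card := by
  refine ⟨fun v => if h : v ∈ S then (S.equivFin ⟨v, h⟩ : ℕ) else 0, ?_, ?_⟩
  · intro v hv
    simp only [hv, dif_pos]
    exact (S.equivFin ⟨v, hv⟩).isLt
  · intro u hu v hv hadj
    simp only [hu, hv, dif_pos]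
    intro h
    have h2 : (⟨u, hu⟩ : {x // x ∈ S}) = ⟨v, hv⟩ := S.equivFin.injective (Fin.ext h)
    exact G.ne_of_adj hadj (by simpa using congrArg Subtype.val h2)

lemma relColorable_mono {S : Finset V} {k m : ℕ} (h : k ≤ m) (hc : RelColorable G S k) :
    RelColorable G S m := by
  obtain ⟨f, h1, h2⟩ := hc
  exact ⟨f, fun v hv => lt_of_lt_of_le (h1 v hv) h, h2⟩

lemma relChi_colorable (S : Finset V) : RelColorable G S (relChi G S) :=
  Nat.sInf_mem (⟨S.card, relColorable_card (G := G) S⟩ : {k | RelColorable G S k}.Nonempty)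

lemma relChi_le {S : Finset V} {k : ℕ} (h : RelColorable G S k) : relChi G S ≤ k :=
  Nat.sInf_le h

lemma stable_inter_clique_card_le {A Q : Finset V} (hA : RelStable G A) (hQ : RelClique G Q) :
    (A ∩ Q).card ≤ 1 := by
  by_contra h
  push_neg at h
  obtain ⟨u, hu, v, hv, huv⟩ := Finset.one_lt_card.mp h
  simp only [Finset.mem_inter] at hu hv
  exact hA u hu.1 v hv.1 (hQ u hu.2 v hv.2 huv)

lemma relOmega_le_relChi (S : Finset V) : relOmega G S ≤ relChi G S := by
  obtain ⟨Q, hQS, hQ, hcard⟩ := relOmega_spec (G := G) S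
  obtain ⟨f, hf1, hf2⟩ := relChi_colorable (G := G) S
  rw [← hcard]
  calc Q.card = (Q.image f).card := by
        refine (Finset.card_image_of_injOn ?_).symm
        intro u hu v hv hfe
        by_contra hne
        exact hf2 u (hQS hu) v (hQS hv) (hQ u hu v hv hne) hfe
    _ ≤ (Finset.range (relChi G S)).card := by
        refine Finset.card_le_card ?_
        intro k hk
        obtain ⟨v, hv, rfl⟩ := Finset.mem_image.mp hk
        exact Finset.mem_range.mpr (hf1 v (hQS hv))
    _ = relChi G S := Finset.card_range _

lemma clique_injOn {f : V → ℕ} {T Q : Finset V} (hQT : Q ⊆ T) (hcl : RelClique G Q)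
    (hp : ∀ u ∈ T, ∀ v ∈ T, G.Adj u v → f u ≠ f v) : Set.InjOn f ↑Q := by
  intro u hu v hv h
  by_contra hne
  exact hp u (hQT hu) v (hQT hv) (hcl u hu v hv hne) h

lemma filter_card_le_one {f : V → ℕ} {Q : Finset V} (hinj : Set.InjOn f ↑Q) (k : ℕ) :
    (Q.filter (fun v => f v = k)).card ≤ 1 := by
  refine Finset.card_le_one.mpr ?_
  intro a ha b hb
  simp only [Finset.mem_filter] at ha hb
  exact hinj ha.1 hb.1 (ha.2.trans hb.2.symm)

lemma filter_card_eq_one_full {f : V → ℕ} {Q : Finset V} {m : ℕ} (hinj : Set.InjOn f ↑Q)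
    (hlt : ∀ v ∈ Q, f v < m) (hcard : Q.card = m) {k : ℕ} (hk : k < m) :
    (Q.filter (fun v => f v = k)).card = 1 := by
  have himg : (Q.image f).card = m := by rw [Finset.card_image_of_injOn hinj, hcard]
  have hsub : Q.image f ⊆ Finset.range m := by
    intro j hj
    obtain ⟨v, hv, rfl⟩ := Finset.mem_image.mp hj
    exact Finset.mem_range.mpr (hlt v hv)
  have heq : Q.image f = Finset.range m :=
    Finset.eq_of_subset_of_card_le hsub (by rw [himg, Finset.card_range])
  have hkimg : k ∈ Q.image f := heq ▸ Finset.mem_range.mpr hk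
  obtain ⟨v, hv, rfl⟩ := Finset.mem_image.mp hkimg
  refine le_antisymm (filter_card_le_one hinj _) ?_
  exact Finset.card_pos.mpr ⟨v, Finset.mem_filter.mpr ⟨hv, rfl⟩⟩

lemma filter_card_eq_one_missing {f : V → ℕ} {Q : Finset V} {m k₀ : ℕ} (hinj : Set.InjOn f ↑Q)
    (hlt : ∀ v ∈ Q, f v < m) (hcard : Q.card + 1 = m) (hk₀ : k₀ < m)
    (h0 : (Q.filter (fun v => f v = k₀)).card = 0) {k : ℕ} (hk : k < m) (hkk : k ≠ k₀) :
    (Q.filter (fun v => f v = k)).card = 1 := by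
  have h0' : ∀ v ∈ Q, f v ≠ k₀ := by
    intro v hv hfv
    have hm : v ∈ Q.filter (fun v => f v = k₀) := Finset.mem_filter.mpr ⟨hv, hfv⟩
    simp [Finset.card_eq_zero.mp h0] at hm
  have himg : (Q.image f).card = m - 1 := by
    rw [Finset.card_image_of_injOn hinj]; omega
  have hsub : Q.image f ⊆ (Finset.range m).erase k₀ := by
    intro j hj
    obtain ⟨v, hv, rfl⟩ := Finset.mem_image.mp hj
    exact Finset.mem_erase.mpr ⟨h0' v hv, Finset.mem_range.mpr (hlt v hv)⟩
  have heq : Q.image f = (Finset.range m).erase k₀ := by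
    refine Finset.eq_of_subset_of_card_le hsub ?_
    rw [Finset.card_erase_of_mem (Finset.mem_range.mpr hk₀), Finset.card_range, himg]
  have hkimg : k ∈ Q.image f := by
    rw [heq]; exact Finset.mem_erase.mpr ⟨hkk, Finset.mem_range.mpr hk⟩
  obtain ⟨v, hv, rfl⟩ := Finset.mem_image.mp hkimg
  refine le_antisymm (filter_card_le_one hinj _) ?_
  exact Finset.card_pos.mpr ⟨v, Finset.mem_filter.mpr ⟨hv, rfl⟩⟩

/-- Gasparian's theorem: the Lovász condition implies χ = ω for every vertex subset. -/
theorem gasparian (hL : ∀ S : Finset V, S.card ≤ relAlpha G S * relOmega G S) :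
    ∀ S : Finset V, relChi G S = relOmega G S := by
  intro S
  induction S using Finset.strongInduction with
  | _ S ih =>
  refine le_antisymm ?_ (relOmega_le_relChi S)
  by_contra hcon
  push_neg at hcon
  set ω := relOmega G S with hωdef
  have hSne : S.Nonempty := by
    rcases Finset.eq_empty_or_nonempty S with rfl | h
    · have h0 : relChi G (∅ : Finset V) ≤ 0 :=
        relChi_le ⟨fun _ => 0, by simp, by simp⟩
      omega
    · exact h
  have hω1 : 1 ≤ ω := relOmega_pos hSne
  -- key lemma: every nonempty stable subset of S avoids some ω-clique of S
  have key : ∀ A : Finset V, A ⊆ S → A.Nonempty → RelStable G A →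
      ∃ Q, Q ⊆ S \ A ∧ RelClique G Q ∧ Q.card = ω := by
    intro A hAS hAne hAst
    have hTsub : S \ A ⊂ S := by
      obtain ⟨a, ha⟩ := hAne
      exact (Finset.ssubset_iff_of_subset (Finset.sdiff_subset)).mpr
        ⟨a, hAS ha, by simp [ha]⟩
    have hchiT : relChi G (S \ A) = relOmega G (S \ A) := ih _ hTsub
    rcases le_or_gt ω (relOmega G (S \ A)) with hle | hltT
    · obtain ⟨Q, hQ, hQc, hQcard⟩ := relOmega_spec (G := G) (S \ A)
      obtain ⟨Q', hQ'Q, hQ'card⟩ := Finset.exists_subset_card_eq (s := Q) (n := ω) (by omega)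
      exact ⟨Q', hQ'Q.trans hQ, fun u hu v hv huv => hQc u (hQ'Q hu) v (hQ'Q hv) huv, hQ'card⟩
    · exfalso
      have hcol : RelColorable G (S \ A) (ω - 1) := by
        have hc := relChi_colorable (G := G) (S \ A)
        rw [hchiT] at hc
        exact relColorable_mono (by omega) hc
      obtain ⟨f, hf1, hf2⟩ := hcol
      have hcolS : RelColorable G S ω := by
        refine ⟨fun v => if v ∈ A then ω - 1 else f v, ?_, ?_⟩
        · intro v hv
          by_cases h : v ∈ A
          · simp only [h, if_pos]; omega
          · simp only [h, if_neg, if_false]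
            have := hf1 v (Finset.mem_sdiff.mpr ⟨hv, h⟩); omega
        · intro u hu v hv hadj
          by_cases h1 : u ∈ A <;> by_cases h2 : v ∈ A
          · exact absurd hadj (hAst u h1 v h2)
          · simp only [h1, h2, if_pos, if_neg, if_false]
            have := hf1 v (Finset.mem_sdiff.mpr ⟨hv, h2⟩); omega
          · simp only [h1, h2, if_pos, if_neg, if_false]
            have := hf1 u (Finset.mem_sdiff.mpr ⟨hu, h1⟩); omega
          · simp only [h1, h2, if_neg, if_false]
            exact hf2 u (Finset.mem_sdiff.mpr ⟨hu, h1⟩) v (Finset.mem_sdiff.mpr ⟨hv, h2⟩) hadj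
      have := relChi_le hcolS
      omega
  obtain ⟨A₀, hA₀S, hA₀st, hA₀card⟩ := relAlpha_spec (G := G) S
  set α := relAlpha G S with hαdef
  have hα1 : 1 ≤ α := relAlpha_pos hSne
  have hA₀ne : A₀.Nonempty := Finset.card_pos.mp (by omega)
  -- for each a ∈ A₀: an ω-coloring of S.erase a and an ω-clique avoiding a
  have hcolor : ∀ a : {x // x ∈ A₀}, (∃ f : V → ℕ, (∀ v ∈ S.erase a.1, f v < ω) ∧
      ∀ u ∈ S.erase a.1, ∀ v ∈ S.erase a.1, G.Adj u v → f u ≠ f v) ∧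
      ∃ Qa, Qa ⊆ S.erase a.1 ∧ RelClique G Qa ∧ Qa.card = ω := by
    intro a
    have haS : a.1 ∈ S := hA₀S a.2
    obtain ⟨Qa, hQa1, hQa2, hQa3⟩ := key {a.1} (by simpa using haS)
      ⟨a.1, Finset.mem_singleton_self a.1⟩
      (by
        intro u hu v hv
        simp only [Finset.mem_singleton] at hu hv
        subst hu; subst hv
        exact G.irrefl)
    rw [← Finset.erase_eq] at hQa1
    have homega : relOmega G (S.erase a.1) = ω :=
      le_antisymm (relOmega_mono (Finset.erase_subset _ _)) (hQa3 ▸ le_relOmega hQa1 hQa2)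
    have hchi := ih _ (Finset.erase_ssubset haS)
    constructor
    · have := relChi_colorable (G := G) (S.erase a.1)
      rw [hchi, homega] at this
      exact this
    · exact ⟨Qa, hQa1, hQa2, hQa3⟩
  choose f hf1 hf2 using fun a => (hcolor a).1
  choose Qv hQv1 hQv2 hQv3 using fun a => (hcolor a).2
  -- color classes
  set Acl : {x // x ∈ A₀} → ℕ → Finset V :=
    fun a k => (S.erase a.1).filter (fun v => f a v = k) with hAcldef
  have hAclS : ∀ a k, Acl a k ⊆ S :=
    fun a k => (Finset.filter_subset _ _).trans (Finset.erase_subset _ _)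
  have hAclst : ∀ a k, RelStable G (Acl a k) := by
    intro a k u hu v hv hadj
    simp only [hAcldef, Finset.mem_filter] at hu hv
    exact hf2 a u hu.1 v hv.1 hadj (hu.2.trans hv.2.symm)
  have hAclne : ∀ (a : {x // x ∈ A₀}) (k : ℕ), k < ω → (Acl a k).Nonempty := by
    intro a k hk
    have hinj := clique_injOn (hQv1 a) (hQv2 a) (hf2 a)
    have h1 := filter_card_eq_one_full hinj (fun v hv => hf1 a v (hQv1 a hv)) (hQv3 a) hk
    have h2 : 0 < ((Qv a).filter (fun v => f a v = k)).card := by omega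
    obtain ⟨v, hv⟩ := Finset.card_pos.mp h2
    simp only [Finset.mem_filter] at hv
    exact ⟨v, Finset.mem_filter.mpr ⟨hQv1 a hv.1, hv.2⟩⟩
  -- the family of stable sets
  set St : Option ({x // x ∈ A₀} × Fin ω) → Finset V :=
    fun t => t.elim A₀ (fun p => Acl p.1 p.2.1) with hStdef
  have hStS : ∀ t, St t ⊆ S := by
    intro t; cases t with
    | none => exact hA₀S
    | some p => exact hAclS p.1 p.2.1
  have hStst : ∀ t, RelStable G (St t) := by
    intro t; cases t with
    | none => exact hA₀st
    | some p => exact hAclst p.1 p.2.1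
  have hStne : ∀ t, (St t).Nonempty := by
    intro t; cases t with
    | none => exact hA₀ne
    | some p => exact hAclne p.1 p.2.1 p.2.isLt
  -- the cliques
  choose Qt hQt1 hQt2 hQt3 using fun t => key (St t) (hStS t) (hStne t) (hStst t)
  have hQtS : ∀ t, Qt t ⊆ S := fun t => (hQt1 t).trans Finset.sdiff_subset
  have hQtdisj : ∀ t, ∀ v ∈ Qt t, v ∉ St t := fun t v hv => (Finset.mem_sdiff.mp (hQt1 t hv)).2
  have hdiag : ∀ t, (St t ∩ Qt t).card = 0 := by
    intro t
    rw [Finset.card_eq_zero, Finset.eq_empty_iff_forall_notMem]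
    intro v hv
    rw [Finset.mem_inter] at hv
    exact hQtdisj t v hv.2 hv.1
  -- helper: a max clique avoiding a meets each color class of a exactly once
  have hfull : ∀ (a : {x // x ∈ A₀}) (Q : Finset V), Q ⊆ S → RelClique G Q → Q.card = ω →
      a.1 ∉ Q → ∀ k : ℕ, k < ω → (Acl a k ∩ Q).card = 1 := by
    intro a Q hQS hQc hQcard haQ k hk
    have hQerase : Q ⊆ S.erase a.1 :=
      fun v hv => Finset.mem_erase.mpr ⟨fun h => haQ (h ▸ hv), hQS hv⟩
    have hinj := clique_injOn hQerase hQc (hf2 a)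
    have heq : Acl a k ∩ Q = Q.filter (fun v => f a v = k) := by
      ext v
      simp only [hAcldef, Finset.mem_inter, Finset.mem_filter, Finset.mem_erase]
      constructor
      · rintro ⟨⟨h1, h2⟩, h3⟩
        exact ⟨h3, h2⟩
      · rintro ⟨h1, h2⟩
        have h3 := Finset.mem_erase.mp (hQerase h1)
        exact ⟨⟨⟨h3.1, h3.2⟩, h2⟩, h1⟩
    rw [heq]
    exact filter_card_eq_one_full hinj (fun v hv => hf1 a v (hQerase hv)) hQcard hk
  -- off-diagonal pairing is 1
  have hoff : ∀ s t, s ≠ t → (St s ∩ Qt t).card = 1 := by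
    intro s t hst
    cases t with
    | none =>
      cases s with
      | none => exact absurd rfl hst
      | some p =>
        obtain ⟨b, l⟩ := p
        have hbQ : b.1 ∉ Qt none := fun h => hQtdisj none b.1 h b.2
        show (Acl b l.1 ∩ Qt none).card = 1
        exact hfull b _ (hQtS none) (hQt2 none) (hQt3 none) hbQ l l.isLt
    | some p =>
      obtain ⟨a, k⟩ := p
      set t' := some (a, k) with ht'def
      have hQS' : Qt t' ⊆ S := hQtS t'
      have hdisj' : ∀ v ∈ Qt t', v ∉ Acl a k.1 := fun v hv => hQtdisj t' v hv
      have hamem : a.1 ∈ Qt t' := by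
        by_contra hnot
        have h1 := hfull a _ hQS' (hQt2 t') (hQt3 t') hnot k.1 k.isLt
        have h0 : (Acl a k.1 ∩ Qt t').card = 0 := by
          rw [Finset.card_eq_zero, Finset.eq_empty_iff_forall_notMem]
          intro v hv
          rw [Finset.mem_inter] at hv
          exact hdisj' v hv.2 hv.1
        omega
      cases s with
      | none =>
        show (A₀ ∩ Qt t').card = 1
        refine le_antisymm (stable_inter_clique_card_le hA₀st (hQt2 t')) ?_
        exact Finset.card_pos.mpr ⟨a.1, Finset.mem_inter.mpr ⟨a.2, hamem⟩⟩
      | some q =>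
        obtain ⟨b, l⟩ := q
        by_cases hba : b = a
        · subst hba
          have hlk : l ≠ k := by
            intro h; exact hst (by rw [h])
          set Q' := (Qt t').erase b.1 with hQ'def
          have hQ'sub : Q' ⊆ S.erase b.1 := Finset.erase_subset_erase _ hQS'
          have hQ'c : RelClique G Q' := fun u hu v hv huv =>
            hQt2 t' u (Finset.erase_subset _ _ hu) v (Finset.erase_subset _ _ hv) huv
          have hinj := clique_injOn hQ'sub hQ'c (hf2 b)
          have hcard' : Q'.card + 1 = ω := by
            rw [hQ'def, Finset.card_erase_of_mem hamem, hQt3 t']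
            omega
          have h0 : (Q'.filter (fun v => f b v = k.1)).card = 0 := by
            rw [Finset.card_eq_zero, Finset.eq_empty_iff_forall_notMem]
            intro v hv
            simp only [Finset.mem_filter] at hv
            refine hdisj' v (Finset.erase_subset _ _ hv.1) ?_
            exact Finset.mem_filter.mpr ⟨hQ'sub hv.1, hv.2⟩
          have h1 := filter_card_eq_one_missing hinj (fun v hv => hf1 b v (hQ'sub hv))
            hcard' k.isLt h0 l.isLt (fun h => hlk (Fin.ext h))
          have heq : Acl b l.1 ∩ Qt t' = Q'.filter (fun v => f b v = l.1) := by
            ext v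
            simp only [hAcldef, Finset.mem_inter, Finset.mem_filter, hQ'def, Finset.mem_erase]
            constructor
            · rintro ⟨⟨⟨h1', h2'⟩, h3'⟩, h4'⟩
              exact ⟨⟨h1', h4'⟩, h3'⟩
            · rintro ⟨⟨h1', h2'⟩, h3'⟩
              exact ⟨⟨⟨h1', hQS' h2'⟩, h3'⟩, h2'⟩
          show (Acl b l.1 ∩ Qt t').card = 1
          rw [heq]
          exact h1
        · have hbQ : b.1 ∉ Qt t' := by
            intro hb
            have hcard_le := stable_inter_clique_card_le hA₀st (hQt2 t')
            have hb' : b.1 ∈ A₀ ∩ Qt t' := Finset.mem_inter.mpr ⟨b.2, hb⟩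
            have ha' : a.1 ∈ A₀ ∩ Qt t' := Finset.mem_inter.mpr ⟨a.2, hamem⟩
            have hne : b.1 ≠ a.1 := fun h => hba (Subtype.ext h)
            have h2 : 1 < (A₀ ∩ Qt t').card := Finset.one_lt_card.mpr ⟨b.1, hb', a.1, ha', hne⟩
            omega
          show (Acl b l.1 ∩ Qt t').card = 1
          exact hfull b _ hQS' (hQt2 t') (hQt3 t') hbQ l l.isLt
  -- linear algebra
  have hcards : ∀ W : Finset V, W ⊆ S →
      (Finset.univ.filter (fun v : {x // x ∈ S} => v.1 ∈ W)).card = W.card := by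
    intro W hWS
    refine Finset.card_bij (fun v _ => v.1) ?_ ?_ ?_
    · intro v hv; exact (Finset.mem_filter.mp hv).2
    · intro v₁ h₁ v₂ h₂ h; exact Subtype.ext h
    · intro w hw
      exact ⟨⟨w, hWS hw⟩, Finset.mem_filter.mpr ⟨Finset.mem_univ _, hw⟩, rfl⟩
  set xv : Option ({x // x ∈ A₀} × Fin ω) → ({x // x ∈ S} → ℝ) := fun t v => if v.1 ∈ St t then (1:ℝ) else 0 with hxvdef
  set L : Option ({x // x ∈ A₀} × Fin ω) → ({x // x ∈ S} → ℝ) →ₗ[ℝ] ℝ := fun t =>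
    ∑ v ∈ Finset.univ.filter (fun v : {x // x ∈ S} => v.1 ∈ Qt t), LinearMap.proj v
    with hLdef
  have hLapp : ∀ t y, L t y = ∑ v ∈ Finset.univ.filter (fun v : {x // x ∈ S} => v.1 ∈ Qt t), y v := by
    intro t y
    simp [hLdef, LinearMap.sum_apply]
  have hpair : ∀ t s, L s (xv t) = ((St t ∩ Qt s).card : ℝ) := by
    intro t s
    rw [hLapp]
    have h1 : (∑ v ∈ Finset.univ.filter (fun v : {x // x ∈ S} => v.1 ∈ Qt s), xv t v)
        = ∑ v ∈ Finset.univ.filter (fun v : {x // x ∈ S} => v.1 ∈ Qt s),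
            (if v.1 ∈ St t then (1:ℝ) else 0) := by
      refine Finset.sum_congr rfl fun v _ => ?_
      rw [hxvdef]
    rw [h1, Finset.sum_boole, Finset.filter_filter]
    have h2 : Finset.univ.filter (fun v : {x // x ∈ S} => v.1 ∈ Qt s ∧ v.1 ∈ St t)
        = Finset.univ.filter (fun v : {x // x ∈ S} => v.1 ∈ St t ∩ Qt s) := by
      ext v
      simp only [Finset.mem_filter, Finset.mem_inter]
      tauto
    rw [h2]
    norm_cast
    exact hcards (St t ∩ Qt s) ((Finset.inter_subset_left).trans (hStS t))
  -- linear independence of the stable set indicator vectors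
  have hli : LinearIndependent ℝ xv := by
    rw [Fintype.linearIndependent_iff]
    intro g hg
    have hsum : ∀ s, ∑ t, g t * ((St t ∩ Qt s).card : ℝ) = 0 := by
      intro s
      have h := congrArg (L s) hg
      rw [map_sum, map_zero] at h
      calc ∑ t, g t * ((St t ∩ Qt s).card : ℝ) = ∑ t, L s (g t • xv t) := by
            refine Finset.sum_congr rfl fun t _ => ?_
            rw [map_smul, hpair, smul_eq_mul]
        _ = 0 := h
    have hgs : ∀ s, g s = ∑ t, g t := by
      intro s
      have h := hsum s
      have hP : ∀ t, g t * ((St t ∩ Qt s).card : ℝ) = g t - (if t = s then g t else 0) := by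
        intro t
        by_cases hts : t = s
        · subst hts
          rw [hdiag]
          simp
        · rw [hoff t s hts]
          simp [hts]
      rw [Finset.sum_congr rfl (fun t _ => hP t), Finset.sum_sub_distrib] at h
      simp only [Finset.sum_ite_eq', Finset.mem_univ, if_true] at h
      linarith
    have hT0 : (∑ t, g t) = 0 := by
      have hTcard : (∑ t, g t) = (Fintype.card (Option ({x // x ∈ A₀} × Fin ω)) : ℝ) * (∑ t, g t) := by
        nth_rewrite 1 [Finset.sum_congr rfl (fun s _ => hgs s)]
        rw [Finset.sum_const, Finset.card_univ, nsmul_eq_mul]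
      have hcardι : Fintype.card (Option ({x // x ∈ A₀} × Fin ω)) = α * ω + 1 := by
        rw [Fintype.card_option, Fintype.card_prod, Fintype.card_coe, Fintype.card_fin, hA₀card]
      have h2n : 2 ≤ Fintype.card (Option ({x // x ∈ A₀} × Fin ω)) := by
        have h1n := Nat.mul_le_mul hα1 hω1
        omega
      have h2 : (2:ℝ) ≤ (Fintype.card (Option ({x // x ∈ A₀} × Fin ω)) : ℝ) := by exact_mod_cast h2n
      nlinarith [hTcard]
    intro i
    rw [hgs i, hT0]
  have hcard_le := hli.fintype_card_le_finrank
  rw [Module.finrank_fintype_fun_eq_card, Fintype.card_coe] at hcard_le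
  have hcardι : Fintype.card (Option ({x // x ∈ A₀} × Fin ω)) = α * ω + 1 := by
    rw [Fintype.card_option, Fintype.card_prod, Fintype.card_coe, Fintype.card_fin, hA₀card]
  have hLS := hL S
  rw [← hαdef, ← hωdef] at hLS
  omega

/-- Easy direction of Lovász's characterization. -/
theorem perfect_lovasz (h : ∀ S : Finset V, relChi G S = relOmega G S) :
    ∀ S : Finset V, S.card ≤ relAlpha G S * relOmega G S := by
  intro S
  obtain ⟨f, hf1, hf2⟩ := relChi_colorable (G := G) S
  have hsub : S ⊆ (Finset.range (relChi G S)).biUnion (fun k => S.filter (fun v => f v = k)) := by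
    intro v hv
    exact Finset.mem_biUnion.mpr ⟨f v, Finset.mem_range.mpr (hf1 v hv),
      Finset.mem_filter.mpr ⟨hv, rfl⟩⟩
  calc S.card ≤ _ := Finset.card_le_card hsub
    _ ≤ ∑ k ∈ Finset.range (relChi G S), (S.filter (fun v => f v = k)).card :=
        Finset.card_biUnion_le
    _ ≤ ∑ _k ∈ Finset.range (relChi G S), relAlpha G S := by
        refine Finset.sum_le_sum fun k _ => ?_
        refine le_relAlpha (Finset.filter_subset _ _) ?_
        intro u hu v hv hadj
        simp only [Finset.mem_filter] at hu hv
        exact hf2 u hu.1 v hv.1 hadj (hu.2.trans hv.2.symm)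
    _ = relChi G S * relAlpha G S := by
        rw [Finset.sum_const, Finset.card_range, smul_eq_mul]
    _ = relAlpha G S * relOmega G S := by rw [h S, Nat.mul_comm]

lemma relClique_compl {Q : Finset V} : RelClique Gᶜ Q ↔ RelStable G Q := by
  constructor
  · intro h u hu v hv hadj
    rcases eq_or_ne u v with rfl | hne
    · exact G.irrefl hadj
    · exact ((G.compl_adj u v).mp (h u hu v hv hne)).2 hadj
  · intro h u hu v hv hne
    exact (G.compl_adj u v).mpr ⟨hne, h u hu v hv⟩

lemma relStable_compl {A : Finset V} : RelStable Gᶜ A ↔ RelClique G A := by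
  constructor
  · intro h u hu v hv huv
    by_contra hadj
    exact h u hu v hv ((G.compl_adj u v).mpr ⟨huv, hadj⟩)
  · intro h u hu v hv hadj
    rw [G.compl_adj] at hadj
    exact hadj.2 (h u hu v hv hadj.1)

lemma relOmega_compl (S : Finset V) : relOmega Gᶜ S = relAlpha G S := by
  unfold relOmega relAlpha
  congr 1
  ext k
  constructor
  · rintro ⟨Q, h1, h2, h3⟩; exact ⟨Q, h1, relClique_compl.mp h2, h3⟩
  · rintro ⟨Q, h1, h2, h3⟩; exact ⟨Q, h1, relClique_compl.mpr h2, h3⟩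

lemma relAlpha_compl (S : Finset V) : relAlpha Gᶜ S = relOmega G S := by
  unfold relOmega relAlpha
  congr 1
  ext k
  constructor
  · rintro ⟨Q, h1, h2, h3⟩; exact ⟨Q, h1, relStable_compl.mp h2, h3⟩
  · rintro ⟨Q, h1, h2, h3⟩; exact ⟨Q, h1, relStable_compl.mpr h2, h3⟩

def RelPerfect (G : SimpleGraph V) : Prop := ∀ S : Finset V, relChi G S = relOmega G S

theorem RelPerfect.compl (h : RelPerfect G) : RelPerfect Gᶜ := by
  refine gasparian (fun S => ?_)
  rw [relAlpha_compl, relOmega_compl, Nat.mul_comm]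
  exact perfect_lovasz h S

/-- Every subset of a perfect graph can be partitioned into `relAlpha` cliques. -/
theorem clique_cover (h : RelPerfect G) (S : Finset V) :
    ∃ f : V → ℕ, (∀ v ∈ S, f v < relAlpha G S) ∧
      ∀ k : ℕ, RelClique G (S.filter (fun v => f v = k)) := by
  have h2 : relChi Gᶜ S = relAlpha G S := by rw [h.compl S, relOmega_compl]
  obtain ⟨f, hf1, hf2⟩ := relChi_colorable (G := Gᶜ) S
  rw [h2] at hf1
  refine ⟨f, hf1, ?_⟩
  intro k u hu v hv huv
  simp only [Finset.mem_filter] at hu hv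
  by_contra hadj
  exact hf2 u hu.1 v hv.1 ((G.compl_adj u v).mpr ⟨huv, hadj⟩) (hu.2.trans hv.2.symm)

/-- Weighted Lovász bound in a perfect graph. -/
theorem weighted_bound (h : RelPerfect G) (S : Finset V) (w : V → ℕ) {N : ℕ}
    (hN : ∀ Q ⊆ S, RelClique G Q → ∑ v ∈ Q, w v ≤ N) :
    ∑ v ∈ S, w v ≤ relAlpha G S * N := by
  obtain ⟨f, hf1, hf2⟩ := clique_cover h S
  have hmaps : ∀ v ∈ S, f v ∈ Finset.range (relAlpha G S) :=
    fun v hv => Finset.mem_range.mpr (hf1 v hv)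
  calc ∑ v ∈ S, w v
      = ∑ k ∈ Finset.range (relAlpha G S), ∑ v ∈ S.filter (fun v => f v = k), w v :=
        (Finset.sum_fiberwise_of_maps_to hmaps w).symm
    _ ≤ ∑ _k ∈ Finset.range (relAlpha G S), N := by
        refine Finset.sum_le_sum fun k _ => ?_
        exact hN _ (Finset.filter_subset _ _) (hf2 k)
    _ = relAlpha G S * N := by rw [Finset.sum_const, Finset.card_range, smul_eq_mul]

section Blowup

variable (w : V → ℕ)

/-- fibers of a finset of the blown-up vertex type are small -/
lemma fiber_card_le (T : Finset (Σ v : V, Fin (w v))) (v : V) :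
    (T.filter (fun x => x.1 = v)).card ≤ w v := by
  have hsub : T.filter (fun x => x.1 = v) ⊆
      (Finset.univ : Finset (Fin (w v))).map ⟨fun i => ⟨v, i⟩, fun i j hij => by
        simpa using hij⟩ := by
    intro x hx
    obtain ⟨u, i⟩ := x
    have h := (Finset.mem_filter.mp hx).2
    simp only at h
    subst h
    simp
    exact ⟨i, rfl⟩
  calc (T.filter (fun x => x.1 = v)).card ≤ _ := Finset.card_le_card hsub
    _ = w v := by simp

lemma fiber_univ_card (v : V) :
    ((Finset.univ : Finset (Σ v : V, Fin (w v))).filter (fun x => x.1 = v)).card = w v := by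
  refine le_antisymm (fiber_card_le w _ v) ?_
  have hsub : (Finset.univ : Finset (Fin (w v))).map ⟨fun i => ⟨v, i⟩, fun i j hij => by
      simpa using hij⟩ ⊆ (Finset.univ : Finset (Σ v : V, Fin (w v))).filter (fun x => x.1 = v) := by
    intro x hx
    obtain ⟨i, -, rfl⟩ := Finset.mem_map.mp hx
    simp
    rfl
  calc w v = ((Finset.univ : Finset (Fin (w v))).map _).card := by simp
    _ ≤ _ := Finset.card_le_card hsub

/-- Perfect graphs admit weighted colorings: an integral weight function whose
cliques all weigh at most `N` decomposes into `N` stable sets (with multiplicity). -/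
theorem perfect_weighted_coloring (h : RelPerfect G) (N : ℕ)
    (hw : ∀ Q : Finset V, RelClique G Q → ∑ v ∈ Q, w v ≤ N) :
    ∃ B : ℕ → Finset V, (∀ k, RelStable G (B k)) ∧
      ∀ v, ((Finset.range N).filter (fun k => v ∈ B k)).card = w v := by
  set W := Σ v : V, Fin (w v) with hWdef
  set H : SimpleGraph W := SimpleGraph.fromRel (fun x y => x.1 = y.1 ∨ G.Adj x.1 y.1) with hHdef
  have hHadj : ∀ x y : W, H.Adj x y ↔ x ≠ y ∧ (x.1 = y.1 ∨ G.Adj x.1 y.1) := by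
    intro x y
    rw [hHdef, SimpleGraph.fromRel_adj]
    constructor
    · rintro ⟨hne, (h' | h') | (h' | h')⟩
      · exact ⟨hne, Or.inl h'⟩
      · exact ⟨hne, Or.inr h'⟩
      · exact ⟨hne, Or.inl h'.symm⟩
      · exact ⟨hne, Or.inr h'.symm⟩
    · rintro ⟨hne, h'⟩
      exact ⟨hne, Or.inl h'⟩
  -- the blow-up satisfies the Lovász condition
  have hH : ∀ T : Finset W, T.card ≤ relAlpha H T * relOmega H T := by
    intro T
    set S := T.image Sigma.fst with hSdef
    set w' : V → ℕ := fun v => (T.filter (fun x => x.1 = v)).card with hw'def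
    have hcardT : T.card = ∑ v ∈ S, w' v :=
      Finset.card_eq_sum_card_fiberwise (fun x hx => Finset.mem_image_of_mem _ hx)
    -- a maximizing clique
    have hmaxex : ∃ Q₀ ∈ S.powerset.filter (RelClique G),
        ∀ Q ∈ S.powerset.filter (RelClique G), ∑ v ∈ Q, w' v ≤ ∑ v ∈ Q₀, w' v := by
      refine Finset.exists_max_image _ _ ⟨∅, ?_⟩
      refine Finset.mem_filter.mpr ⟨Finset.mem_powerset.mpr (Finset.empty_subset _), ?_⟩
      intro u hu
      exact absurd hu (Finset.notMem_empty u)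
    obtain ⟨Q₀, hQ₀mem, hQ₀max⟩ := hmaxex
    have hQ₀S : Q₀ ⊆ S := Finset.mem_powerset.mp (Finset.mem_filter.mp hQ₀mem).1
    have hQ₀c : RelClique G Q₀ := (Finset.mem_filter.mp hQ₀mem).2
    have hbound : ∑ v ∈ S, w' v ≤ relAlpha G S * ∑ v ∈ Q₀, w' v := by
      refine weighted_bound h S w' ?_
      intro Q hQS hQc
      exact hQ₀max Q (Finset.mem_filter.mpr ⟨Finset.mem_powerset.mpr hQS, hQc⟩)
    -- lift a maximum stable set of G to the blow-up
    have halpha : relAlpha G S ≤ relAlpha H T := by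
      obtain ⟨A, hAS, hAst, hAcard⟩ := relAlpha_spec (G := G) S
      have hfib : ∀ v : {x // x ∈ A}, ∃ x, x ∈ T ∧ x.1 = v.1 := by
        intro v
        obtain ⟨x, hx, hx2⟩ := Finset.mem_image.mp (hAS v.2)
        exact ⟨x, hx, hx2⟩
      set φ : {x // x ∈ A} → W := fun v => (hfib v).choose with hφdef
      have hφT : ∀ v, φ v ∈ T := fun v => (hfib v).choose_spec.1
      have hφfst : ∀ v, (φ v).1 = v.1 := fun v => (hfib v).choose_spec.2
      set A' := A.attach.image φ with hA'def
      have hA'T : A' ⊆ T := by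
        intro x hx
        obtain ⟨v, -, rfl⟩ := Finset.mem_image.mp hx
        exact hφT v
      have hA'card : A'.card = A.card := by
        rw [hA'def, Finset.card_image_of_injOn, Finset.card_attach]
        intro u _ v _ huv
        have : u.1 = v.1 := by rw [← hφfst u, ← hφfst v, huv]
        exact Subtype.ext this
      have hA'st : RelStable H A' := by
        intro x hx y hy hadj
        obtain ⟨u, -, rfl⟩ := Finset.mem_image.mp hx
        obtain ⟨v, -, rfl⟩ := Finset.mem_image.mp hy
        rw [hHadj] at hadj
        obtain ⟨hne, hor⟩ := hadj
        have hne' : u.1 ≠ v.1 := by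
          intro hh
          exact hne (by rw [show u = v from Subtype.ext hh])
        rcases hor with h' | h'
        · rw [hφfst u, hφfst v] at h'
          exact hne' h'
        · rw [hφfst u, hφfst v] at h'
          exact hAst u.1 u.2 v.1 v.2 h'
      calc relAlpha G S = A'.card := by rw [hA'card, hAcard]
        _ ≤ relAlpha H T := le_relAlpha hA'T hA'st
    -- the union of the fibers over a clique is a clique in the blow-up
    have homega : ∑ v ∈ Q₀, w' v ≤ relOmega H T := by
      set K := T.filter (fun x => x.1 ∈ Q₀) with hKdef
      have hKT : K ⊆ T := Finset.filter_subset _ _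
      have hKc : RelClique H K := by
        intro x hx y hy hxy
        rw [hHadj]
        refine ⟨hxy, ?_⟩
        rcases eq_or_ne x.1 y.1 with he | hne
        · exact Or.inl he
        · refine Or.inr (hQ₀c x.1 (Finset.mem_filter.mp hx).2 y.1 (Finset.mem_filter.mp hy).2 hne)
      have hKcard : K.card = ∑ v ∈ Q₀, w' v := by
        rw [hKdef]
        rw [Finset.card_eq_sum_card_fiberwise
          (f := Sigma.fst) (s := T.filter (fun x => x.1 ∈ Q₀)) (t := Q₀) (fun x hx => (Finset.mem_filter.mp hx).2)]
        refine Finset.sum_congr rfl fun v hv => ?_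
        rw [hw'def]
        congr 1
        rw [Finset.filter_filter]
        ext x
        simp only [Finset.mem_filter]
        constructor
        · rintro ⟨h1, -, h3⟩; exact ⟨h1, h3⟩
        · rintro ⟨h1, h2⟩; exact ⟨h1, h2 ▸ hv, h2⟩
      calc ∑ v ∈ Q₀, w' v = K.card := hKcard.symm
        _ ≤ relOmega H T := le_relOmega hKT hKc
    calc T.card = ∑ v ∈ S, w' v := hcardT
      _ ≤ relAlpha G S * ∑ v ∈ Q₀, w' v := hbound
      _ ≤ relAlpha H T * relOmega H T := Nat.mul_le_mul halpha homega
  -- the blow-up is ω-colorable with at most N colors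
  have homega_le : relOmega H Finset.univ ≤ N := by
    obtain ⟨K, -, hKc, hKcard⟩ := relOmega_spec (G := H) Finset.univ
    rw [← hKcard]
    set Q := K.image Sigma.fst with hQdef
    have hQc : RelClique G Q := by
      intro u hu v hv huv
      obtain ⟨x, hx, rfl⟩ := Finset.mem_image.mp hu
      obtain ⟨y, hy, rfl⟩ := Finset.mem_image.mp hv
      have hxy : x ≠ y := by
        intro hh
        exact huv (by rw [hh])
      have := (hHadj x y).mp (hKc x hx y hy hxy)
      rcases this.2 with h' | h'
      · exact absurd h' huv
      · exact h'
    calc K.card = ∑ v ∈ Q, (K.filter (fun x => x.1 = v)).card :=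
          Finset.card_eq_sum_card_fiberwise (fun x hx => Finset.mem_image_of_mem _ hx)
      _ ≤ ∑ v ∈ Q, w v := Finset.sum_le_sum fun v _ => fiber_card_le w K v
      _ ≤ N := hw Q hQc
  have hchi : RelColorable H Finset.univ N := by
    have hh := gasparian hH Finset.univ
    have := relChi_colorable (G := H) Finset.univ
    rw [hh] at this
    exact relColorable_mono homega_le this
  obtain ⟨f, hf1, hf2⟩ := hchi
  refine ⟨fun k => Finset.univ.filter (fun v : V => ∃ i : Fin (w v), f ⟨v, i⟩ = k), ?_, ?_⟩
  · intro k u hu v hv hadj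
    simp only [Finset.mem_filter, Finset.mem_univ, true_and] at hu hv
    obtain ⟨i, hi⟩ := hu
    obtain ⟨j, hj⟩ := hv
    have hne : (⟨u, i⟩ : W) ≠ ⟨v, j⟩ := by
      intro hh
      exact G.ne_of_adj hadj (congrArg Sigma.fst hh)
    have hadj' : H.Adj ⟨u, i⟩ ⟨v, j⟩ := (hHadj _ _).mpr ⟨hne, Or.inr hadj⟩
    exact hf2 _ (Finset.mem_univ _) _ (Finset.mem_univ _) hadj' (hi.trans hj.symm)
  · intro v
    have hinj : Set.InjOn (fun i : Fin (w v) => f ⟨v, i⟩) ↑(Finset.univ : Finset (Fin (w v))) := by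
      intro i _ j _ hij
      by_contra hne
      have hxy : (⟨v, i⟩ : W) ≠ ⟨v, j⟩ := by
        intro hh
        apply hne
        simpa using hh
      have hadj' : H.Adj ⟨v, i⟩ ⟨v, j⟩ := (hHadj _ _).mpr ⟨hxy, Or.inl rfl⟩
      exact hf2 _ (Finset.mem_univ _) _ (Finset.mem_univ _) hadj' hij
    have himg : ((Finset.univ : Finset (Fin (w v))).image (fun i => f ⟨v, i⟩)).card = w v := by
      rw [Finset.card_image_of_injOn hinj, Finset.card_univ, Fintype.card_fin]
    rw [← himg]
    congr 1
    ext k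
    simp only [Finset.mem_filter, Finset.mem_range, Finset.mem_image, Finset.mem_univ, true_and]
    constructor
    · rintro ⟨-, i, hi⟩; exact ⟨i, hi⟩
    · rintro ⟨i, hi⟩
      exact ⟨hi ▸ hf1 ⟨v, i⟩ (Finset.mem_univ _), i, hi⟩

end Blowup

section Bridge
open SimpleGraph

def cliqueNum'' {V : Type*} (G : SimpleGraph V) : ℕ :=
  sSup {n | ∃ s : Finset V, G.IsNClique n s}

variable {V : Type*} [Fintype V] (G : SimpleGraph V)

lemma colorable_iff_relColorable (S : Set V) (n : ℕ) :
    (G.induce S).Colorable n ↔ RelColorable G S.toFinset n := by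
  constructor
  · rintro ⟨c⟩
    refine ⟨fun v => if h : v ∈ S then (c ⟨v, h⟩ : Fin n).val else 0, ?_, ?_⟩
    · intro v hv
      have h : v ∈ S := Set.mem_toFinset.mp hv
      simp only [h, dif_pos]
      exact (c ⟨v, h⟩).isLt
    · intro u hu v hv hadj
      have hu' : u ∈ S := Set.mem_toFinset.mp hu
      have hv' : v ∈ S := Set.mem_toFinset.mp hv
      simp only [hu', hv', dif_pos]
      have hadj' : (G.induce S).Adj ⟨u, hu'⟩ ⟨v, hv'⟩ := by
        simp only [comap_adj, Function.Embedding.coe_subtype]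
        exact hadj
      intro hh
      exact c.valid hadj' (Fin.ext hh)
  · rintro ⟨f, hf1, hf2⟩
    refine ⟨Coloring.mk (fun a => ⟨f a.1, hf1 a.1 (Set.mem_toFinset.mpr a.2)⟩) ?_⟩
    intro a b hadj
    have hGadj : G.Adj a.1 b.1 := by
      simpa only [comap_adj, Function.Embedding.coe_subtype] using hadj
    intro hh
    refine hf2 a.1 (Set.mem_toFinset.mpr a.2) b.1 (Set.mem_toFinset.mpr b.2) hGadj ?_
    simpa using congrArg Fin.val hh

lemma chromaticNumber_eq_relChi (S : Set V) :
    (G.induce S).chromaticNumber = (relChi G S.toFinset : ℕ∞) := by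
  refine le_antisymm ?_ ?_
  · exact ((colorable_iff_relColorable G S _).mpr (relChi_colorable _)).chromaticNumber_le
  · have hfin := (G.induce S).colorable_of_fintype
    have hne : (G.induce S).chromaticNumber ≠ ⊤ := by
      have hle := hfin.chromaticNumber_le
      intro hh
      rw [hh] at hle
      exact (lt_irrefl _ (lt_of_lt_of_le (WithTop.coe_lt_top _) hle)).elim
    have hcol : (G.induce S).Colorable (G.induce S).chromaticNumber.toNat :=
      SimpleGraph.colorable_chromaticNumber hfin
    have h1 : relChi G S.toFinset ≤ (G.induce S).chromaticNumber.toNat :=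
      relChi_le ((colorable_iff_relColorable G S _).mp hcol)
    calc ((relChi G S.toFinset : ℕ) : ℕ∞) ≤ ((G.induce S).chromaticNumber.toNat : ℕ∞) := by
          exact_mod_cast h1
      _ = _ := ENat.coe_toNat hne

lemma cliqueNum''_eq_relOmega (S : Set V) :
    cliqueNum'' (G.induce S) = relOmega G S.toFinset := by
  unfold cliqueNum'' relOmega
  congr 1
  ext k
  constructor
  · rintro ⟨s, hs⟩
    refine ⟨s.map ⟨Subtype.val, Subtype.val_injective⟩, ?_, ?_, ?_⟩
    · intro v hv
      obtain ⟨a, ha, rfl⟩ := Finset.mem_map.mp hv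
      exact Set.mem_toFinset.mpr a.2
    · intro u hu v hv huv
      obtain ⟨a, ha, rfl⟩ := Finset.mem_map.mp hu
      obtain ⟨b, hb, rfl⟩ := Finset.mem_map.mp hv
      have hab : a ≠ b := fun h => huv (by rw [h])
      have hadj := hs.isClique (Finset.mem_coe.mpr ha) (Finset.mem_coe.mpr hb) hab
      exact (by simpa only [comap_adj, Function.Embedding.coe_subtype] using hadj : G.Adj a.1 b.1)
    · rw [Finset.card_map]
      exact hs.card_eq
  · rintro ⟨Q, hQS, hQc, hQcard⟩
    refine ⟨Q.subtype (· ∈ S), ?_, ?_⟩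
    · intro a ha b hb hab
      have ha' : a.1 ∈ Q := by
        have := Finset.mem_coe.mp ha
        simpa using Finset.mem_subtype.mp this
      have hb' : b.1 ∈ Q := by
        have := Finset.mem_coe.mp hb
        simpa using Finset.mem_subtype.mp this
      have hGadj : G.Adj a.1 b.1 := hQc a.1 ha' b.1 hb' (fun h => hab (Subtype.ext h))
      simpa only [comap_adj, Function.Embedding.coe_subtype] using hGadj
    · rw [Finset.card_subtype]
      have heq : Q.filter (fun v => v ∈ S) = Q :=
        Finset.filter_true_of_mem (fun v hv => Set.mem_toFinset.mp (hQS hv))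
      rw [heq, hQcard]

theorem relPerfect_iff :
    (∀ S : Set V, (G.induce S).chromaticNumber = (cliqueNum'' (G.induce S) : ℕ∞))
      ↔ RelPerfect G := by
  constructor
  · intro h S
    have h2 := h (↑S : Set V)
    rw [chromaticNumber_eq_relChi, cliqueNum''_eq_relOmega, Finset.toFinset_coe] at h2
    exact_mod_cast h2
  · intro h S
    rw [chromaticNumber_eq_relChi, cliqueNum''_eq_relOmega]
    exact_mod_cast h S.toFinset

end Bridge


section Geometry

/-- A clique of integer-cornered rectangles has a common grid point. -/
lemma clique_common_point {n : ℕ} {K : Finset Rect} (hK : ∀ R ∈ K, IntCornersIn n R)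
    (hne : K.Nonempty) (hint : ∀ R ∈ K, ∀ S ∈ K, R ≠ S → Intersects R S) :
    ∃ i j : ℤ, 1 ≤ i ∧ i ≤ (n : ℤ) ∧ 1 ≤ j ∧ j ≤ (n : ℤ) ∧
      ∀ R ∈ K, (((i : ℝ), (j : ℝ)) : Pt) ∈ R := by
  choose a b hab1 hab2 ha1 hb1 ha2 hb2 heq using fun R : {x // x ∈ K} => hK R.1 R.2
  have hmem : ∀ (R : {x // x ∈ K}) (p : Pt), p ∈ R.1 ↔
      ((a R).1 : ℝ) ≤ p.1 ∧ ((a R).2 : ℝ) ≤ p.2 ∧ p.1 ≤ ((b R).1 : ℝ) ∧ p.2 ≤ ((b R).2 : ℝ) := by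
    intro R p
    rw [heq R, Set.mem_Icc, Prod.le_def, Prod.le_def]
    tauto
  -- pairwise inequalities
  have hpw1 : ∀ R S : {x // x ∈ K}, (a R).1 ≤ (b S).1 := by
    intro R S
    rcases eq_or_ne R.1 S.1 with h | h
    · have h3 : ((b R).1 : ℝ) ≤ ((b S).1 : ℝ) := by
        have hbRS : (((b R).1 : ℝ), ((b R).2 : ℝ)) ∈ S.1 := by
          rw [← h]
          refine (hmem R _).mpr ⟨?_, ?_, le_refl _, le_refl _⟩
          · exact (show ((a R).1 : ℝ) ≤ ((b R).1 : ℝ) by exact_mod_cast hab1 R)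
          · exact (show ((a R).2 : ℝ) ≤ ((b R).2 : ℝ) by exact_mod_cast hab2 R)
        exact ((hmem S _).mp hbRS).2.2.1
      have h4 : ((a R).1 : ℝ) ≤ ((b S).1 : ℝ) :=
        le_trans (show ((a R).1 : ℝ) ≤ ((b R).1 : ℝ) by exact_mod_cast hab1 R) h3
      exact_mod_cast h4
    · obtain ⟨p, hp⟩ := hint R.1 R.2 S.1 S.2 h
      have h1 := ((hmem R p).mp hp.1).1
      have h2 := ((hmem S p).mp hp.2).2.2.1
      exact_mod_cast le_trans h1 h2
  have hpw2 : ∀ R S : {x // x ∈ K}, (a R).2 ≤ (b S).2 := by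
    intro R S
    rcases eq_or_ne R.1 S.1 with h | h
    · have h3 : ((b R).2 : ℝ) ≤ ((b S).2 : ℝ) := by
        have hbRS : (((b R).1 : ℝ), ((b R).2 : ℝ)) ∈ S.1 := by
          rw [← h]
          refine (hmem R _).mpr ⟨?_, ?_, le_refl _, le_refl _⟩
          · exact (show ((a R).1 : ℝ) ≤ ((b R).1 : ℝ) by exact_mod_cast hab1 R)
          · exact (show ((a R).2 : ℝ) ≤ ((b R).2 : ℝ) by exact_mod_cast hab2 R)
        exact ((hmem S _).mp hbRS).2.2.2
      have h4 : ((a R).2 : ℝ) ≤ ((b S).2 : ℝ) :=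
        le_trans (show ((a R).2 : ℝ) ≤ ((b R).2 : ℝ) by exact_mod_cast hab2 R) h3
      exact_mod_cast h4
    · obtain ⟨p, hp⟩ := hint R.1 R.2 S.1 S.2 h
      have h1 := ((hmem R p).mp hp.1).2.1
      have h2 := ((hmem S p).mp hp.2).2.2.2
      exact_mod_cast le_trans h1 h2
  -- take the maxima of the lower corners
  have hattne : (K.attach.image (fun R => (a R).1)).Nonempty :=
    (hne.attach).image _
  have hattne2 : (K.attach.image (fun R => (a R).2)).Nonempty :=
    (hne.attach).image _
  obtain ⟨i, hiMem, hile⟩ : ∃ i, i ∈ K.attach.image (fun R => (a R).1) ∧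
      ∀ R : {x // x ∈ K}, (a R).1 ≤ i :=
    ⟨_, Finset.max'_mem _ hattne, fun R =>
      Finset.le_max' (K.attach.image (fun R => (a R).1)) ((a R).1)
        (Finset.mem_image.mpr ⟨R, Finset.mem_attach _ _, rfl⟩)⟩
  obtain ⟨j, hjMem, hjle⟩ : ∃ j, j ∈ K.attach.image (fun R => (a R).2) ∧
      ∀ R : {x // x ∈ K}, (a R).2 ≤ j :=
    ⟨_, Finset.max'_mem _ hattne2, fun R =>
      Finset.le_max' (K.attach.image (fun R => (a R).2)) ((a R).2)
        (Finset.mem_image.mpr ⟨R, Finset.mem_attach _ _, rfl⟩)⟩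
  obtain ⟨R₀, -, hR₀⟩ := Finset.mem_image.mp hiMem
  obtain ⟨S₀, -, hS₀⟩ := Finset.mem_image.mp hjMem
  refine ⟨i, j, ?_, ?_, ?_, ?_, ?_⟩
  · rw [← hR₀]; exact ha1 R₀
  · rw [← hR₀]; exact le_trans (hpw1 R₀ R₀) (hb1 R₀)
  · rw [← hS₀]; exact ha2 S₀
  · rw [← hS₀]; exact le_trans (hpw2 S₀ S₀) (hb2 S₀)
  · intro R hR
    rw [hmem ⟨R, hR⟩ _]
    refine ⟨(show ((a ⟨R, hR⟩).1 : ℝ) ≤ (i : ℝ) by exact_mod_cast hile ⟨R, hR⟩),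
      (show ((a ⟨R, hR⟩).2 : ℝ) ≤ (j : ℝ) by exact_mod_cast hjle ⟨R, hR⟩), ?_, ?_⟩
    · rw [← hR₀]
      exact (show ((a R₀).1 : ℝ) ≤ ((b ⟨R, hR⟩).1 : ℝ) by exact_mod_cast hpw1 R₀ ⟨R, hR⟩)
    · rw [← hS₀]
      exact (show ((a S₀).2 : ℝ) ≤ ((b ⟨R, hR⟩).2 : ℝ) by exact_mod_cast hpw2 S₀ ⟨R, hR⟩)

/-- Every integer-cornered rectangle contains a grid point. -/
lemma rect_grid_point {n : ℕ} {R : Rect} (hR : IntCornersIn n R) :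
    ∃ i j : ℤ, 1 ≤ i ∧ i ≤ (n : ℤ) ∧ 1 ≤ j ∧ j ≤ (n : ℤ) ∧ (((i : ℝ), (j : ℝ)) : Pt) ∈ R := by
  have h := clique_common_point (K := {R}) (by simpa using hR) ⟨R, Finset.mem_singleton_self R⟩
    (by
      intro A hA B hB hAB
      simp only [Finset.mem_singleton] at hA hB
      exact absurd (hA.trans hB.symm) hAB)
  obtain ⟨i, j, h1, h2, h3, h4, h5⟩ := h
  exact ⟨i, j, h1, h2, h3, h4, h5 R (Finset.mem_singleton_self R)⟩

/-- Two intersecting integer-cornered rectangles share a grid point. -/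
lemma pair_grid_point {n : ℕ} {R S : Rect} (hR : IntCornersIn n R) (hS : IntCornersIn n S)
    (hRS : Intersects R S) :
    ∃ i j : ℤ, 1 ≤ i ∧ i ≤ (n : ℤ) ∧ 1 ≤ j ∧ j ≤ (n : ℤ) ∧
      (((i : ℝ), (j : ℝ)) : Pt) ∈ R ∧ (((i : ℝ), (j : ℝ)) : Pt) ∈ S := by
  rcases eq_or_ne R S with rfl | hne
  · obtain ⟨i, j, h1, h2, h3, h4, h5⟩ := rect_grid_point hR
    exact ⟨i, j, h1, h2, h3, h4, h5, h5⟩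
  · have h := clique_common_point (K := {R, S}) (by
        intro A hA
        rcases Finset.mem_insert.mp hA with rfl | hA
        · exact hR
        · rw [Finset.mem_singleton.mp hA]; exact hS)
      ⟨R, Finset.mem_insert_self R {S}⟩
      (by
        intro A hA B hB hAB
        rcases Finset.mem_insert.mp hA with rfl | hA' <;>
          rcases Finset.mem_insert.mp hB with rfl | hB'
        · exact absurd rfl hAB
        · rw [Finset.mem_singleton.mp hB']; exact hRS
        · rw [Finset.mem_singleton.mp hA']
          obtain ⟨p, hp1, hp2⟩ := hRS
          exact ⟨p, hp2, hp1⟩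
        · rw [Finset.mem_singleton.mp hA', Finset.mem_singleton.mp hB'] at hAB
          exact absurd rfl hAB)
    obtain ⟨i, j, h1, h2, h3, h4, h5⟩ := h
    exact ⟨i, j, h1, h2, h3, h4, h5 R (Finset.mem_insert_self R {S}),
      h5 S (Finset.mem_insert_of_mem (Finset.mem_singleton_self S))⟩

end Geometry

section Polytope

lemma interGraph_adj {K : Set Rect} (u v : {R : Rect // R ∈ K}) :
    (interGraph K).Adj u v ↔ u ≠ v ∧ Intersects u.1 v.1 := by
  unfold interGraph
  rw [SimpleGraph.fromRel_adj]
  constructor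
  · rintro ⟨hne, h | h⟩
    · exact ⟨hne, h⟩
    · obtain ⟨p, hp⟩ := h
      exact ⟨hne, p, hp.2, hp.1⟩
  · rintro ⟨hne, h⟩
    exact ⟨hne, Or.inl h⟩

def indicVec (A : Finset Rect) : Rect → ℝ := fun R => if R ∈ A then 1 else 0

def stabSet (C : Finset Rect) : Set (Rect → ℝ) :=
  indicVec '' {A : Finset Rect | A ⊆ C ∧ ∀ R ∈ A, ∀ S ∈ A, R ≠ S → ¬ Intersects R S}

variable {n : ℕ} {C : Finset Rect}

lemma stabSet_finite (C : Finset Rect) : (stabSet C).Finite :=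
  Set.Finite.image _ (Set.Finite.subset (C.powerset : Finset (Finset Rect)).finite_toSet
    (fun A hA => Finset.mem_coe.mpr (Finset.mem_powerset.mpr hA.1)))

lemma qstab_convex : Convex ℝ (QSTAB n C) := by
  intro x hx y hy p q hp hq hpq
  obtain ⟨hx1, hx2, hx3⟩ := hx
  obtain ⟨hy1, hy2, hy3⟩ := hy
  refine ⟨?_, ?_, ?_⟩
  · intro R
    have heval : (p • x + q • y) R = p * x R + q * y R := rfl
    rw [heval]
    have := hx1 R
    have := hy1 R
    positivity
  · intro R hR
    show p * x R + q * y R = 0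
    rw [hx2 R hR, hy2 R hR]
    ring
  · intro i j h1 h2 h3 h4
    have heval : ∀ R, (p • x + q • y) R = p * x R + q * y R := fun R => rfl
    calc ∑ R ∈ C.filter (fun R => (((i:ℝ), (j:ℝ)) : Pt) ∈ R), (p • x + q • y) R
        = p * (∑ R ∈ C.filter (fun R => (((i:ℝ), (j:ℝ)) : Pt) ∈ R), x R)
          + q * (∑ R ∈ C.filter (fun R => (((i:ℝ), (j:ℝ)) : Pt) ∈ R), y R) := by
          rw [Finset.mul_sum, Finset.mul_sum, ← Finset.sum_add_distrib]
          exact Finset.sum_congr rfl fun R _ => heval R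
      _ ≤ p * 1 + q * 1 := by
          refine add_le_add ?_ ?_
          · exact mul_le_mul_of_nonneg_left (hx3 i j h1 h2 h3 h4) hp
          · exact mul_le_mul_of_nonneg_left (hy3 i j h1 h2 h3 h4) hq
      _ = 1 := by rw [mul_one, mul_one, hpq]

lemma stabSet_subset_qstab : stabSet C ⊆ QSTAB n C := by
  rintro _ ⟨A, ⟨hAC, hAst⟩, rfl⟩
  refine ⟨?_, ?_, ?_⟩
  · intro R
    unfold indicVec
    split <;> norm_num
  · intro R hR
    unfold indicVec
    rw [if_neg (fun h => hR (hAC h))]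
  · intro i j h1 h2 h3 h4
    unfold indicVec
    rw [Finset.sum_boole]
    have hcard : ((C.filter (fun R => (((i:ℝ), (j:ℝ)) : Pt) ∈ R)).filter (fun R => R ∈ A)).card ≤ 1 := by
      refine Finset.card_le_one.mpr ?_
      intro R hR S hS
      simp only [Finset.mem_filter] at hR hS
      by_contra hne
      exact hAst R hR.2 S hS.2 hne ⟨((i:ℝ), (j:ℝ)), hR.1.2, hS.1.2⟩
    exact_mod_cast hcard

lemma qstab_isClosed : IsClosed (QSTAB n C) := by
  have heq : QSTAB n C =
      (⋂ R : Rect, {x : Rect → ℝ | 0 ≤ x R}) ∩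
      ((⋂ R ∈ {R : Rect | R ∉ C}, {x : Rect → ℝ | x R = 0}) ∩
       (⋂ p : ℤ × ℤ, ⋂ (_ : 1 ≤ p.1 ∧ p.1 ≤ (n : ℤ) ∧ 1 ≤ p.2 ∧ p.2 ≤ (n : ℤ)),
         {x : Rect → ℝ | ∑ R ∈ C.filter (fun R => (((p.1 : ℝ), (p.2 : ℝ)) : Pt) ∈ R), x R ≤ 1})) := by
    ext x
    simp only [QSTAB, Set.mem_setOf_eq, Set.mem_inter_iff, Set.mem_iInter]
    constructor
    · rintro ⟨h1, h2, h3⟩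
      exact ⟨h1, h2, fun p hp => h3 p.1 p.2 hp.1 hp.2.1 hp.2.2.1 hp.2.2.2⟩
    · rintro ⟨h1, h2, h3⟩
      exact ⟨h1, h2, fun i j hi1 hi2 hj1 hj2 => h3 (i, j) ⟨hi1, hi2, hj1, hj2⟩⟩
  rw [heq]
  refine IsClosed.inter (isClosed_iInter fun R => isClosed_le continuous_const (continuous_apply R))
    (IsClosed.inter ?_ ?_)
  · exact isClosed_biInter fun R _ => isClosed_eq (continuous_apply R) continuous_const
  · refine isClosed_iInter fun p => isClosed_iInter fun _ => ?_
    exact isClosed_le (continuous_finset_sum _ fun R _ => continuous_apply R) continuous_const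

lemma qstab_le_one (hC : ∀ R ∈ C, IntCornersIn n R) {x : Rect → ℝ} (hx : x ∈ QSTAB n C)
    {R : Rect} (hR : R ∈ C) : x R ≤ 1 := by
  obtain ⟨i, j, h1, h2, h3, h4, h5⟩ := rect_grid_point (hC R hR)
  refine le_trans (Finset.single_le_sum (fun S _ => hx.1 S) ?_) (hx.2.2 i j h1 h2 h3 h4)
  exact Finset.mem_filter.mpr ⟨hR, h5⟩

lemma qstab_isCompact (hC : ∀ R ∈ C, IntCornersIn n R) : IsCompact (QSTAB n C) := by
  refine IsCompact.of_isClosed_subset (isCompact_univ_pi (s := fun R : Rect =>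
    if R ∈ C then Set.Icc (0:ℝ) 1 else {0}) ?_) qstab_isClosed ?_
  · intro R
    by_cases h : R ∈ C
    · simp only [h, if_pos]
      exact isCompact_Icc
    · simp only [h, if_neg, if_false]
      exact isCompact_singleton
  · intro x hx
    rw [Set.mem_univ_pi]
    intro R
    by_cases h : R ∈ C
    · simp only [h, if_pos]
      exact ⟨hx.1 R, qstab_le_one hC hx h⟩
    · simp only [h, if_neg, if_false]
      exact hx.2.1 R h

lemma zero_one_mem_stabSet (hC : ∀ R ∈ C, IntCornersIn n R) {x : Rect → ℝ}
    (hx : x ∈ QSTAB n C) (h01 : ∀ R, x R = 0 ∨ x R = 1) : x ∈ stabSet C := by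
  refine ⟨C.filter (fun R => x R = 1), ⟨Finset.filter_subset _ _, ?_⟩, ?_⟩
  · intro R hR S hS hne hint
    simp only [Finset.mem_filter] at hR hS
    obtain ⟨i, j, h1, h2, h3, h4, h5R, h5S⟩ := pair_grid_point (hC R hR.1) (hC S hS.1) hint
    have hsum := hx.2.2 i j h1 h2 h3 h4
    have hsub : ({R, S} : Finset Rect) ⊆ C.filter (fun T => (((i:ℝ), (j:ℝ)) : Pt) ∈ T) := by
      intro T hT
      rcases Finset.mem_insert.mp hT with rfl | hT
      · exact Finset.mem_filter.mpr ⟨hR.1, h5R⟩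
      · rw [Finset.mem_singleton.mp hT]
        exact Finset.mem_filter.mpr ⟨hS.1, h5S⟩
    have h2le : (2:ℝ) ≤ ∑ T ∈ C.filter (fun T => (((i:ℝ), (j:ℝ)) : Pt) ∈ T), x T := by
      calc (2:ℝ) = x R + x S := by rw [hR.2, hS.2]; norm_num
        _ = ∑ T ∈ ({R, S} : Finset Rect), x T := by
            rw [Finset.sum_insert (by simpa using hne), Finset.sum_singleton]
        _ ≤ _ := Finset.sum_le_sum_of_subset_of_nonneg hsub (fun T _ _ => hx.1 T)
    linarith
  · show indicVec _ = x
    funext R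
    unfold indicVec
    by_cases h : R ∈ C
    · rcases h01 R with h0 | h1
      · rw [if_neg, h0]
        intro hh
        have := (Finset.mem_filter.mp hh).2
        rw [h0] at this
        norm_num at this
      · rw [if_pos (Finset.mem_filter.mpr ⟨h, h1⟩), h1]
    · rw [if_neg, hx.2.1 R h]
      intro hh
      exact h (Finset.mem_filter.mp hh).1

end Polytope

section Hull

variable {n : ℕ} {C : Finset Rect}

lemma qstab_subset_hull (hC : ∀ R ∈ C, IntCornersIn n R)
    (hperf : RelPerfect (interGraph (↑C : Set Rect))) :
    QSTAB n C ⊆ convexHull ℝ (stabSet C) := by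
  intro x hx
  have hclosed : IsClosed (convexHull ℝ (stabSet C)) :=
    ((stabSet_finite C).isCompact_convexHull (𝕜 := ℝ)).isClosed
  -- approximating points with denominator N
  have happrox : ∀ N : ℕ, 0 < N → ∃ y ∈ convexHull ℝ (stabSet C),
      ∀ R : Rect, y R = (⌊(N : ℝ) * x R⌋₊ : ℝ) / N := by
    intro N hN
    set w : {R : Rect // R ∈ (↑C : Set Rect)} → ℕ := fun v => ⌊(N : ℝ) * x v.1⌋₊ with hwdef
    have hcl : ∀ Q : Finset {R : Rect // R ∈ (↑C : Set Rect)},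
        RelClique (interGraph (↑C : Set Rect)) Q → ∑ v ∈ Q, w v ≤ N := by
      intro Q hQ
      rcases Finset.eq_empty_or_nonempty Q with rfl | hQne
      · simp
      set K := Q.image Subtype.val with hKdef
      have hKC : ∀ R ∈ K, R ∈ C := by
        intro R hR
        obtain ⟨v, -, rfl⟩ := Finset.mem_image.mp hR
        exact v.2
      have hKne : K.Nonempty := hQne.image _
      have hKint : ∀ R ∈ K, ∀ S ∈ K, R ≠ S → Intersects R S := by
        intro R hR S hS hne
        obtain ⟨u, hu, rfl⟩ := Finset.mem_image.mp hR
        obtain ⟨v, hv, rfl⟩ := Finset.mem_image.mp hS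
        have huv : u ≠ v := fun h => hne (by rw [h])
        exact ((interGraph_adj u v).mp (hQ u hu v hv huv)).2
      obtain ⟨i, j, h1, h2, h3, h4, h5⟩ :=
        clique_common_point (fun R hR => hC R (hKC R hR)) hKne hKint
      have hsumx : ∑ R ∈ K, x R ≤ 1 := by
        refine le_trans (Finset.sum_le_sum_of_subset_of_nonneg ?_ (fun T _ _ => hx.1 T))
          (hx.2.2 i j h1 h2 h3 h4)
        intro R hR
        exact Finset.mem_filter.mpr ⟨hKC R hR, h5 R hR⟩
      have hreal : ((∑ v ∈ Q, w v : ℕ) : ℝ) ≤ (N : ℝ) := by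
        push_cast
        calc ∑ v ∈ Q, ((w v : ℕ) : ℝ) ≤ ∑ v ∈ Q, (N : ℝ) * x v.1 := by
              refine Finset.sum_le_sum fun v _ => ?_
              exact Nat.floor_le (mul_nonneg (Nat.cast_nonneg N) (hx.1 v.1))
          _ = (N : ℝ) * ∑ v ∈ Q, x v.1 := by rw [Finset.mul_sum]
          _ = (N : ℝ) * ∑ R ∈ K, x R := by
              rw [hKdef, Finset.sum_image (fun u _ v _ h => Subtype.ext h)]
          _ ≤ (N : ℝ) * 1 := mul_le_mul_of_nonneg_left hsumx (Nat.cast_nonneg N)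
          _ = (N : ℝ) := mul_one _
      exact_mod_cast hreal
    obtain ⟨B, hBst, hBcount⟩ := perfect_weighted_coloring (w := w) hperf N hcl
    set A : ℕ → Finset Rect := fun k => (B k).image Subtype.val with hAdef
    have hAstab : ∀ k, indicVec (A k) ∈ stabSet C := by
      intro k
      refine ⟨A k, ⟨?_, ?_⟩, rfl⟩
      · intro R hR
        obtain ⟨v, -, rfl⟩ := Finset.mem_image.mp hR
        exact v.2
      · intro R hR S hS hne hint
        obtain ⟨u, hu, rfl⟩ := Finset.mem_image.mp hR
        obtain ⟨v, hv, rfl⟩ := Finset.mem_image.mp hS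
        have huv : u ≠ v := fun h => hne (by rw [h])
        exact hBst k u hu v hv ((interGraph_adj u v).mpr ⟨huv, hint⟩)
    have hw1 : ∑ _k ∈ Finset.range N, ((N : ℝ))⁻¹ = 1 := by
      rw [Finset.sum_const, Finset.card_range, nsmul_eq_mul]
      field_simp
    have hmem := Finset.centerMass_mem_convexHull (Finset.range N)
      (w := fun _ => ((N : ℝ))⁻¹) (fun i _ => by positivity) (by rw [hw1]; norm_num)
      (fun k _ => hAstab k)
    rw [Finset.centerMass_eq_of_sum_1 _ _ hw1] at hmem
    refine ⟨_, hmem, ?_⟩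
    intro R
    have heval : (∑ k ∈ Finset.range N, ((N : ℝ))⁻¹ • indicVec (A k)) R
        = (N : ℝ)⁻¹ * ∑ k ∈ Finset.range N, indicVec (A k) R := by
      rw [Finset.sum_apply]
      simp only [Pi.smul_apply, smul_eq_mul]
      rw [← Finset.mul_sum]
    rw [heval]
    have hcount : ∑ k ∈ Finset.range N, indicVec (A k) R
        = (((Finset.range N).filter (fun k => R ∈ A k)).card : ℝ) := by
      unfold indicVec
      rw [Finset.sum_boole]
    rw [hcount]
    by_cases h : R ∈ C
    · have hmemc : R ∈ (↑C : Set Rect) := h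
      have hfilter : (Finset.range N).filter (fun k => R ∈ A k)
          = (Finset.range N).filter (fun k => (⟨R, hmemc⟩ : {R // R ∈ (↑C : Set Rect)}) ∈ B k) := by
        ext k
        simp only [Finset.mem_filter, hAdef, Finset.mem_image, and_congr_right_iff]
        intro _
        constructor
        · rintro ⟨v, hv, hveq⟩
          have : v = ⟨R, hmemc⟩ := Subtype.ext hveq
          exact this ▸ hv
        · intro hk
          exact ⟨⟨R, hmemc⟩, hk, rfl⟩
      rw [hfilter]
      have hBc : (((Finset.range N).filter
          (fun k => (⟨R, hmemc⟩ : {R // R ∈ (↑C : Set Rect)}) ∈ B k)).card : ℝ)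
          = ((w ⟨R, hmemc⟩ : ℕ) : ℝ) := by
        have hBc0 := hBcount ⟨R, hmemc⟩
        norm_cast
        convert hBc0 using 2
        exact congrArg (fun h : DecidablePred (fun k : ℕ =>
            (⟨R, hmemc⟩ : {R // R ∈ (↑C : Set Rect)}) ∈ B k) =>
          @Finset.filter ℕ _ h (Finset.range N)) (Subsingleton.elim _ _)
      rw [hBc, hwdef, inv_mul_eq_div]
    · have hfilter : (Finset.range N).filter (fun k => R ∈ A k) = ∅ := by
        refine Finset.filter_false_of_mem ?_
        intro k _
        intro hk
        obtain ⟨v, -, rfl⟩ := Finset.mem_image.mp hk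
        exact h v.2
      rw [hfilter]
      rw [hx.2.1 R h]
      simp
  choose y hy1 hy2 using fun m : ℕ => happrox (m + 1) (Nat.succ_pos m)
  have htend : Filter.Tendsto y Filter.atTop (nhds x) := by
    rw [tendsto_pi_nhds]
    intro R
    have hm1 : ∀ m : ℕ, (0:ℝ) < ((m + 1 : ℕ) : ℝ) := by
      intro m
      positivity
    have hub : ∀ m : ℕ, y m R ≤ x R := by
      intro m
      rw [hy2 m R]
      rw [div_le_iff₀ (hm1 m)]
      calc (⌊((m + 1 : ℕ) : ℝ) * x R⌋₊ : ℝ) ≤ ((m + 1 : ℕ) : ℝ) * x R :=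
            Nat.floor_le (mul_nonneg (le_of_lt (hm1 m)) (hx.1 R))
        _ = x R * ((m + 1 : ℕ) : ℝ) := mul_comm _ _
    have hlb : ∀ m : ℕ, x R - 1 / ((m : ℝ) + 1) ≤ y m R := by
      intro m
      rw [hy2 m R, le_div_iff₀ (hm1 m)]
      have hfl : ((m + 1 : ℕ) : ℝ) * x R - 1 < (⌊((m + 1 : ℕ) : ℝ) * x R⌋₊ : ℝ) :=
        Nat.sub_one_lt_floor _
      have hcast : ((m + 1 : ℕ) : ℝ) = (m : ℝ) + 1 := by push_cast; ring
      rw [hcast] at hfl ⊢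
      have hone : (1 / ((m : ℝ) + 1)) * ((m : ℝ) + 1) = 1 := by
        field_simp
      nlinarith [hfl, hone]
    refine tendsto_of_tendsto_of_tendsto_of_le_of_le
      (g := fun m : ℕ => x R - 1 / ((m : ℝ) + 1)) (h := fun _ : ℕ => x R) ?_ tendsto_const_nhds hlb hub
    have := tendsto_one_div_add_atTop_nhds_zero_nat (𝕜 := ℝ)
    have h2 := Filter.Tendsto.sub (tendsto_const_nhds (x := x R) (f := Filter.atTop (α := ℕ))) this
    simpa using h2
  exact hclosed.mem_of_tendsto htend (Filter.Eventually.of_forall hy1)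

end Hull

end RectPerfect

/-- For a finite family C of axis-parallel closed rectangles with integer
corners in [n]², the polytope QSTAB(C) is integral (every extreme point has all
coordinates in {0,1}) iff the intersection graph I(C) is a perfect graph. -/
theorem qstab_integral_iff_perfect (n : ℕ) (C : Finset Rect)
    (hC : ∀ R ∈ C, IntCornersIn n R) :
    (∀ x ∈ Set.extremePoints ℝ (QSTAB n C), ∀ R : Rect, x R = 0 ∨ x R = 1) ↔
      IsPerfect (interGraph (↑C : Set Rect)) := by
  have hcn : ∀ (S : Set {R : Rect // R ∈ (↑C : Set Rect)}),
      cliqueNum' ((interGraph (↑C : Set Rect)).induce S)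
        = RectPerfect.cliqueNum'' ((interGraph (↑C : Set Rect)).induce S) := fun _ => rfl
  have hIsP : IsPerfect (interGraph (↑C : Set Rect)) ↔
      RectPerfect.RelPerfect (interGraph (↑C : Set Rect)) := by
    unfold IsPerfect
    constructor
    · intro h
      exact (RectPerfect.relPerfect_iff _).mp (fun S => by rw [← hcn]; exact h S)
    · intro h S
      rw [hcn]
      exact (RectPerfect.relPerfect_iff _).mpr h S
  constructor
  · -- integrality implies perfection
    intro hext
    apply hIsP.mpr
    have hsub : QSTAB n C ⊆ convexHull ℝ (RectPerfect.stabSet C) := by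
      have hKM := closure_convexHull_extremePoints (RectPerfect.qstab_isCompact hC)
        RectPerfect.qstab_convex
      have hsub2 : Set.extremePoints ℝ (QSTAB n C) ⊆ RectPerfect.stabSet C := fun z hz =>
        RectPerfect.zero_one_mem_stabSet hC hz.1 (hext z hz)
      calc QSTAB n C = closure (convexHull ℝ (Set.extremePoints ℝ (QSTAB n C))) := hKM.symm
        _ ⊆ closure (convexHull ℝ (RectPerfect.stabSet C)) :=
            closure_mono (convexHull_mono hsub2)
        _ = convexHull ℝ (RectPerfect.stabSet C) :=
            (((RectPerfect.stabSet_finite C).isCompact_convexHull (𝕜 := ℝ)).isClosed).closure_eq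
    refine RectPerfect.gasparian ?_
    intro S
    rcases Finset.eq_empty_or_nonempty S with rfl | hSne
    · simp
    have hω1 : 1 ≤ RectPerfect.relOmega (interGraph (↑C : Set Rect)) S :=
      RectPerfect.relOmega_pos hSne
    set ω := RectPerfect.relOmega (interGraph (↑C : Set Rect)) S with hωdef
    set α := RectPerfect.relAlpha (interGraph (↑C : Set Rect)) S with hαdef
    set T := S.image Subtype.val with hTdef
    have hTC : ∀ R ∈ T, R ∈ C := by
      intro R hR
      obtain ⟨v, -, rfl⟩ := Finset.mem_image.mp hR
      exact v.2
    have hTcard : T.card = S.card := Finset.card_image_of_injOn (fun u _ v _ h => Subtype.ext h)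
    set x : Rect → ℝ := fun R => if R ∈ T then ((ω : ℝ))⁻¹ else 0 with hxdef
    have hxQ : x ∈ QSTAB n C := by
      refine ⟨?_, ?_, ?_⟩
      · intro R
        show (0:ℝ) ≤ if R ∈ T then ((ω : ℝ))⁻¹ else 0
        split
        · positivity
        · exact le_rfl
      · intro R hR
        show (if R ∈ T then ((ω : ℝ))⁻¹ else 0) = 0
        rw [if_neg (fun h => hR (hTC R h))]
      · intro i j h1 h2 h3 h4
        set D := S.filter (fun v => (((i:ℝ), (j:ℝ)) : Pt) ∈ v.1) with hDdef
        have hDclique : RectPerfect.RelClique (interGraph (↑C : Set Rect)) D := by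
          intro u hu v hv huv
          simp only [hDdef, Finset.mem_filter] at hu hv
          exact (RectPerfect.interGraph_adj u v).mpr ⟨huv, ((i:ℝ), (j:ℝ)), hu.2, hv.2⟩
        have hDcard : D.card ≤ ω := RectPerfect.le_relOmega (Finset.filter_subset _ _) hDclique
        have hfeq : (C.filter (fun R => (((i:ℝ), (j:ℝ)) : Pt) ∈ R)).filter (fun R => R ∈ T)
            = D.image Subtype.val := by
          ext R
          simp only [Finset.mem_filter, Finset.mem_image, hDdef, hTdef]
          constructor
          · rintro ⟨⟨hRC, hRq⟩, v, hv, rfl⟩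
            exact ⟨v, ⟨hv, hRq⟩, rfl⟩
          · rintro ⟨v, ⟨hv, hq⟩, rfl⟩
            exact ⟨⟨v.2, hq⟩, v, hv, rfl⟩
        have hDicard : (D.image Subtype.val).card = D.card :=
          Finset.card_image_of_injOn (fun u _ v _ h => Subtype.ext h)
        calc ∑ R ∈ C.filter (fun R => (((i:ℝ), (j:ℝ)) : Pt) ∈ R), x R
            = ∑ R ∈ C.filter (fun R => (((i:ℝ), (j:ℝ)) : Pt) ∈ R),
                (if R ∈ T then ((ω : ℝ))⁻¹ else 0) := Finset.sum_congr rfl fun R _ => rfl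
          _ = ∑ R ∈ (C.filter (fun R => (((i:ℝ), (j:ℝ)) : Pt) ∈ R)).filter (fun R => R ∈ T),
                ((ω : ℝ))⁻¹ := (Finset.sum_filter _ _).symm
          _ = (D.card : ℝ) * ((ω : ℝ))⁻¹ := by
              rw [Finset.sum_const, hfeq, hDicard, nsmul_eq_mul]
          _ ≤ (ω : ℝ) * ((ω : ℝ))⁻¹ := by
              have hωpos : (0:ℝ) < (ω : ℝ) := by exact_mod_cast hω1
              have : (D.card : ℝ) ≤ (ω : ℝ) := by exact_mod_cast hDcard
              have hinv : (0:ℝ) ≤ ((ω : ℝ))⁻¹ := by positivity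
              exact mul_le_mul_of_nonneg_right this hinv
          _ = 1 := by
              have hωne : (ω : ℝ) ≠ 0 := by
                have : (0:ℝ) < (ω : ℝ) := by exact_mod_cast hω1
                exact ne_of_gt this
              field_simp
    have hxhull := hsub hxQ
    have hhalf : ∀ y ∈ RectPerfect.stabSet C, ∑ R ∈ T, y R ≤ (α : ℝ) := by
      rintro _ ⟨A, ⟨hAC, hAst⟩, rfl⟩
      set A' := S.filter (fun v => v.1 ∈ A) with hA'def
      have hA'st : RectPerfect.RelStable (interGraph (↑C : Set Rect)) A' := by
        intro u hu v hv hadj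
        simp only [hA'def, Finset.mem_filter] at hu hv
        obtain ⟨hne, hint⟩ := (RectPerfect.interGraph_adj u v).mp hadj
        exact hAst u.1 hu.2 v.1 hv.2 (fun h => hne (Subtype.ext h)) hint
      have hcard : A'.card ≤ α := RectPerfect.le_relAlpha (Finset.filter_subset _ _) hA'st
      have heq2 : T.filter (fun R => R ∈ A) = A'.image Subtype.val := by
        ext R
        simp only [Finset.mem_filter, Finset.mem_image, hA'def, hTdef]
        constructor
        · rintro ⟨⟨v, hv, rfl⟩, hA⟩
          exact ⟨v, ⟨hv, hA⟩, rfl⟩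
        · rintro ⟨v, ⟨hv, hA⟩, rfl⟩
          exact ⟨⟨v, hv, rfl⟩, hA⟩
      have hicard : (A'.image Subtype.val).card = A'.card :=
        Finset.card_image_of_injOn (fun u _ v _ h => Subtype.ext h)
      calc ∑ R ∈ T, RectPerfect.indicVec A R
          = ∑ R ∈ T, (if R ∈ A then (1:ℝ) else 0) := Finset.sum_congr rfl fun R _ => rfl
        _ = ∑ R ∈ T.filter (fun R => R ∈ A), (1:ℝ) := (Finset.sum_filter _ _).symm
        _ = ((T.filter (fun R => R ∈ A)).card : ℝ) := by
            rw [Finset.sum_const, nsmul_eq_mul, mul_one]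
        _ = (A'.card : ℝ) := by rw [heq2, hicard]
        _ ≤ (α : ℝ) := by exact_mod_cast hcard
    have hconv : ∑ R ∈ T, x R ≤ (α : ℝ) := by
      have hlin : IsLinearMap ℝ (fun y : Rect → ℝ => ∑ R ∈ T, y R) := by
        constructor
        · intro a b
          simp [Finset.sum_add_distrib]
        · intro c a
          simp [Finset.mul_sum]
      exact convexHull_min hhalf (convex_halfSpace_le hlin _) hxhull
    have hLHS : ∑ R ∈ T, x R = (S.card : ℝ) * ((ω : ℝ))⁻¹ := by
      have : ∀ R ∈ T, x R = ((ω : ℝ))⁻¹ := by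
        intro R hR
        show (if R ∈ T then ((ω : ℝ))⁻¹ else 0) = _
        rw [if_pos hR]
      rw [Finset.sum_congr rfl this, Finset.sum_const, nsmul_eq_mul, hTcard]
    have hωpos : (0:ℝ) < (ω : ℝ) := by exact_mod_cast hω1
    have hfin : (S.card : ℝ) ≤ (α : ℝ) * (ω : ℝ) := by
      rw [hLHS] at hconv
      have h2 := mul_le_mul_of_nonneg_right hconv (le_of_lt hωpos)
      have h3 : (S.card : ℝ) * ((ω : ℝ))⁻¹ * (ω : ℝ) = (S.card : ℝ) := by
        field_simp
      rw [h3] at h2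
      exact h2
    exact_mod_cast hfin
  · -- perfection implies integrality
    intro hperf x hx R
    have hrel := hIsP.mp hperf
    have hsub := RectPerfect.qstab_subset_hull hC hrel
    have heq : QSTAB n C = convexHull ℝ (RectPerfect.stabSet C) :=
      Set.Subset.antisymm hsub
        (convexHull_min RectPerfect.stabSet_subset_qstab RectPerfect.qstab_convex)
    rw [heq] at hx
    obtain ⟨A, -, rfl⟩ := extremePoints_convexHull_subset hx
    unfold RectPerfect.indicVec
    by_cases h : R ∈ A
    · right
      rw [if_pos h]
    · left
      rw [if_neg h]
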